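/- arXiv:1608.01415 — 2 statements merged into one kernel-verified Lean document; each statement's English description precedes it below -/
import Mathlib

section
/- Let H < 1/2 and 0 ≤ t_0 ≤ t_1 ≤ ... ≤ t_n ≤ T, let Δ_j = B^H_{t_j} - B^H_{t_{j-1}}, and let ε_1,...,ε_n ∈ {-1,+1}. Then Var(Σ_{j=1}^n ε_j Δ_j) ≤ 2 Σ_{j=1}^n |t_j - t_{j-1}|^{2H}. -/
open MeasureTheory Real
open scoped ENNReal NNReal

lemma submod_rpow {p : ℝ} (hp0 : 0 ≤ p) (hp1 : p ≤ 1) {x y h : ℝ}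
    (hx : 0 ≤ x) (hxy : x ≤ y) (hh : 0 ≤ h) :
    (y + h) ^ p + x ^ p ≤ (x + h) ^ p + y ^ p := by
  rcases eq_or_lt_of_le hh with rfl | hh
  · simp only [add_zero]; linarith
  rcases eq_or_lt_of_le hxy with rfl | hxy
  · linarith
  have hy : (0:ℝ) ≤ y := hx.trans hxy.le
  have hcx : ConvexOn ℝ (Set.Ici 0) (fun z : ℝ => -(z ^ p)) := (Real.concaveOn_rpow hp0 hp1).neg
  set g : ℝ → ℝ := fun z => -(z ^ p) with hg
  have h1 : (g (x + h) - g x) / ((x + h) - x) ≤ (g (y + h) - g x) / ((y + h) - x) :=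
    hcx.secant_mono (Set.mem_Ici.2 hx) (Set.mem_Ici.2 (by linarith)) (Set.mem_Ici.2 (by linarith))
      (by intro hc; nlinarith) (by intro hc; nlinarith) (by linarith)
  have h2 : (g x - g (y + h)) / (x - (y + h)) ≤ (g y - g (y + h)) / (y - (y + h)) :=
    hcx.secant_mono (Set.mem_Ici.2 (by linarith)) (Set.mem_Ici.2 hx) (Set.mem_Ici.2 hy)
      (by intro hc; nlinarith) (by intro hc; nlinarith) hxy.le
  have e1 : (g x - g (y + h)) / (x - (y + h)) = (g (y + h) - g x) / ((y + h) - x) := by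
    rw [← neg_div_neg_eq]; ring_nf
  have e2 : (g y - g (y + h)) / (y - (y + h)) = (g (y + h) - g y) / h := by
    rw [← neg_div_neg_eq]; ring_nf
  have e3 : (g (x + h) - g x) / ((x + h) - x) = (g (x + h) - g x) / h := by ring_nf
  have key : (g (x + h) - g x) / h ≤ (g (y + h) - g y) / h := by
    rw [← e3, ← e2]; exact h1.trans (e1 ▸ h2)
  have := (div_le_div_iff_of_pos_right hh).1 key
  simp only [g] at this
  linarith

lemma fin_telescope : ∀ {n : ℕ} (u : Fin (n + 1) → ℝ),
    ∑ j : Fin n, (u j.succ - u j.castSucc) = u (Fin.last n) - u 0 := by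
  intro n
  induction n with
  | zero => intro u; simp [Fin.last]
  | succ n ih =>
    intro u
    rw [Fin.sum_univ_castSucc]
    have := ih (u ∘ Fin.castSucc)
    simp only [Function.comp_apply] at this
    have e : ∀ j : Fin n, u j.castSucc.succ - u j.castSucc.castSucc
        = u (Fin.castSucc j.succ) - u (Fin.castSucc j.castSucc) := by
      intro j; rw [Fin.succ_castSucc]
    rw [Finset.sum_congr rfl fun j _ => e j, this]
    simp only [Fin.succ_last, Fin.castSucc_zero]
    ring

/-- The fBm covariance kernel. -/
noncomputable def fbmCov (p s u : ℝ) : ℝ := (1 / 2) * (s ^ p + u ^ p - |s - u| ^ p)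

lemma fbmCov_symm (p s u : ℝ) : fbmCov p s u = fbmCov p u s := by
  simp only [fbmCov]; rw [abs_sub_comm]; ring

lemma fbmK_diag {p : ℝ} (hp0 : 0 < p) {A b : ℝ} (hAb : A ≤ b) :
    fbmCov p b b - fbmCov p b A - fbmCov p A b + fbmCov p A A = (b - A) ^ p := by
  simp only [fbmCov, sub_self, abs_zero, Real.zero_rpow hp0.ne']
  rw [abs_of_nonneg (show (0:ℝ) ≤ b - A by linarith),
    abs_of_nonpos (show A - b ≤ 0 by linarith), neg_sub]
  ring

lemma fbmK_nonpos {p : ℝ} (hp0 : 0 < p) (hp1 : p ≤ 1) {A b C D : ℝ}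
    (hA : 0 ≤ A) (hAb : A ≤ b) (hbC : b ≤ C) (hCD : C ≤ D) :
    fbmCov p b D - fbmCov p b C - fbmCov p A D + fbmCov p A C ≤ 0 := by
  simp only [fbmCov]
  rw [abs_of_nonpos (show b - D ≤ 0 by linarith), neg_sub,
    abs_of_nonpos (show b - C ≤ 0 by linarith), neg_sub,
    abs_of_nonpos (show A - D ≤ 0 by linarith), neg_sub,
    abs_of_nonpos (show A - C ≤ 0 by linarith), neg_sub]
  have hs := submod_rpow hp0.le hp1 (x := C - b) (y := C - A) (h := D - C)
    (by linarith) (by linarith) (by linarith)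
  have r1 : C - A + (D - C) = D - A := by ring
  have r2 : C - b + (D - C) = D - b := by ring
  rw [r1, r2] at hs
  linarith

lemma fbm_rowsum_nonneg {p : ℝ} (hp0 : 0 < p) {z f e L : ℝ}
    (hz : 0 ≤ z) (hzf : z ≤ f) (hfe : f ≤ e) (heL : e ≤ L) :
    0 ≤ (fbmCov p e L - fbmCov p e z) - (fbmCov p f L - fbmCov p f z) := by
  simp only [fbmCov]
  rw [abs_of_nonpos (show e - L ≤ 0 by linarith), neg_sub,
    abs_of_nonneg (show (0:ℝ) ≤ e - z by linarith),
    abs_of_nonpos (show f - L ≤ 0 by linarith), neg_sub,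
    abs_of_nonneg (show (0:ℝ) ≤ f - z by linarith)]
  have m1 : (L - e) ^ p ≤ (L - f) ^ p := Real.rpow_le_rpow (by linarith) (by linarith) hp0.le
  have m2 : (f - z) ^ p ≤ (e - z) ^ p := Real.rpow_le_rpow (by linarith) (by linarith) hp0.le
  linarith

/-- Let `H < 1/2` and `0 ≤ t_0 ≤ t_1 ≤ ... ≤ t_n ≤ T`, let
`Δ_j = B^H_{t_j} - B^H_{t_{j-1}}`, and let `ε_1,...,ε_n ∈ {-1,+1}`. Then
`Var(Σ_{j=1}^n ε_j Δ_j) ≤ 2 Σ_{j=1}^n |t_j - t_{j-1}|^{2H}`.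
(The variance of the centered sum is its second moment.) -/
theorem fbm_signed_sum_var_small_H {Ω : Type*} [MeasurableSpace Ω] (μ : Measure Ω)
    [IsProbabilityMeasure μ]
    (H : ℝ) (hH : H ∈ Set.Ioo (0 : ℝ) (1 / 2)) (B : ℝ → Ω → ℝ)
    (hmem : ∀ t, 0 ≤ t → MemLp (B t) 2 μ)
    (hzero : ∀ ω, B 0 ω = 0)
    (hcent : ∀ t, 0 ≤ t → ∫ ω, B t ω ∂μ = 0)
    (hcov : ∀ s t, 0 ≤ s → 0 ≤ t →
      ∫ ω, B s ω * B t ω ∂μ =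
        (1 / 2) * (s ^ (2 * H) + t ^ (2 * H) - |s - t| ^ (2 * H)))
    (n : ℕ) (T : ℝ) (t : Fin (n + 1) → ℝ) (ht0 : 0 ≤ t 0) (hmono : Monotone t)
    (htT : t (Fin.last n) ≤ T)
    (ε : Fin n → ℝ) (hε : ∀ j, ε j = 1 ∨ ε j = -1) :
    ∫ ω, (∑ j : Fin n, ε j * (B (t j.succ) ω - B (t j.castSucc) ω)) ^ 2 ∂μ ≤
      2 * ∑ j : Fin n, |t j.succ - t j.castSucc| ^ (2 * H) := by
  obtain ⟨hH0, hH2⟩ := hH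
  have hp0 : 0 < 2 * H := by linarith
  have hp1 : 2 * H ≤ 1 := by linarith
  have hnn : ∀ i : Fin (n + 1), 0 ≤ t i := fun i => ht0.trans (hmono (Fin.zero_le i))
  have hab : ∀ j : Fin n, t j.castSucc ≤ t j.succ :=
    fun j => hmono (Fin.castSucc_lt_succ : j.castSucc < j.succ).le
  have h11 : (1 : ℝ≥0∞) / 1 = 1 / 2 + 1 / 2 := by
    rw [ENNReal.add_halves, div_one]
  have hmul : ∀ s u : ℝ, 0 ≤ s → 0 ≤ u → Integrable (fun ω => B s ω * B u ω) μ := by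
    intro s u hs hu
    have := ((hmem u hu).smul (hmem s hs) (r := 1)).integrable le_rfl
    exact this
  have hΔmem : ∀ j : Fin n, MemLp (fun ω => B (t j.succ) ω - B (t j.castSucc) ω) 2 μ :=
    fun j => (hmem _ (hnn _)).sub (hmem _ (hnn _))
  have hΔint : ∀ j k : Fin n, Integrable
      (fun ω => (B (t j.succ) ω - B (t j.castSucc) ω) *
        (B (t k.succ) ω - B (t k.castSucc) ω)) μ := by
    intro j k
    have := ((hΔmem k).smul (hΔmem j) (r := 1)).integrable le_rfl
    exact this
  set K : Fin n → Fin n → ℝ := fun j k =>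
    fbmCov (2 * H) (t j.succ) (t k.succ) - fbmCov (2 * H) (t j.succ) (t k.castSucc)
      - fbmCov (2 * H) (t j.castSucc) (t k.succ)
      + fbmCov (2 * H) (t j.castSucc) (t k.castSucc) with hK
  have hD : ∀ j k : Fin n,
      ∫ ω, (B (t j.succ) ω - B (t j.castSucc) ω) *
        (B (t k.succ) ω - B (t k.castSucc) ω) ∂μ = K j k := by
    intro j k
    have e : (fun ω => (B (t j.succ) ω - B (t j.castSucc) ω) *
        (B (t k.succ) ω - B (t k.castSucc) ω))
        = fun ω => B (t j.succ) ω * B (t k.succ) ω - B (t j.succ) ω * B (t k.castSucc) ω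
          - (B (t j.castSucc) ω * B (t k.succ) ω - B (t j.castSucc) ω * B (t k.castSucc) ω) := by
      funext ω; ring
    have i1 : Integrable (fun ω => B (t j.succ) ω * B (t k.succ) ω
        - B (t j.succ) ω * B (t k.castSucc) ω) μ := by
      exact (hmul _ _ (hnn _) (hnn _)).sub (hmul _ _ (hnn _) (hnn _))
    have i2 : Integrable (fun ω => B (t j.castSucc) ω * B (t k.succ) ω
        - B (t j.castSucc) ω * B (t k.castSucc) ω) μ := by
      exact (hmul _ _ (hnn _) (hnn _)).sub (hmul _ _ (hnn _) (hnn _))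
    rw [e, integral_sub i1 i2,
      integral_sub (hmul _ _ (hnn _) (hnn _)) (hmul _ _ (hnn _) (hnn _)),
      integral_sub (hmul _ _ (hnn _) (hnn _)) (hmul _ _ (hnn _) (hnn _)),
      hcov _ _ (hnn _) (hnn _), hcov _ _ (hnn _) (hnn _),
      hcov _ _ (hnn _) (hnn _), hcov _ _ (hnn _) (hnn _)]
    simp only [hK, fbmCov]
    ring
  have hexp : ∫ ω, (∑ j : Fin n, ε j * (B (t j.succ) ω - B (t j.castSucc) ω)) ^ 2 ∂μ
      = ∑ j : Fin n, ∑ k : Fin n, ε j * ε k * K j k := by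
    have e : (fun ω => (∑ j : Fin n, ε j * (B (t j.succ) ω - B (t j.castSucc) ω)) ^ 2)
        = fun ω => ∑ j : Fin n, ∑ k : Fin n, ε j * ε k *
            ((B (t j.succ) ω - B (t j.castSucc) ω) * (B (t k.succ) ω - B (t k.castSucc) ω)) := by
      funext ω
      rw [sq, Finset.sum_mul_sum]
      exact Finset.sum_congr rfl fun j _ => Finset.sum_congr rfl fun k _ => by ring
    rw [e, integral_finset_sum _
      (fun j _ => integrable_finset_sum _ (fun k _ => (hΔint j k).const_mul _))]
    refine Finset.sum_congr rfl fun j _ => ?_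
    rw [integral_finset_sum _ (fun k _ => (hΔint j k).const_mul _)]
    refine Finset.sum_congr rfl fun k _ => ?_
    rw [integral_const_mul, hD j k]
  have hKsym : ∀ j k : Fin n, K j k = K k j := by
    intro j k
    simp only [hK]
    rw [fbmCov_symm (2 * H) (t j.succ) (t k.succ), fbmCov_symm (2 * H) (t j.succ) (t k.castSucc),
      fbmCov_symm (2 * H) (t j.castSucc) (t k.succ),
      fbmCov_symm (2 * H) (t j.castSucc) (t k.castSucc)]
    ring
  have hKdiag : ∀ j : Fin n, K j j = (t j.succ - t j.castSucc) ^ (2 * H) := by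
    intro j
    simp only [hK]
    exact fbmK_diag hp0 (hab j)
  have hKoff : ∀ j k : Fin n, j ≠ k → K j k ≤ 0 := by
    have aux : ∀ j k : Fin n, j < k → K j k ≤ 0 := by
      intro j k hjk
      have hle : t j.succ ≤ t k.castSucc := by
        apply hmono
        rw [Fin.le_def, Fin.val_succ, Fin.coe_castSucc]
        exact hjk
      simp only [hK]
      exact fbmK_nonpos hp0 hp1 (hnn _) (hab j) hle (hab k)
    intro j k hne
    rcases lt_or_gt_of_ne hne with h | h
    · exact aux j k h
    · rw [hKsym]; exact aux k j h
  have hrow : ∀ j : Fin n, 0 ≤ ∑ k : Fin n, K j k := by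
    intro j
    have t1 := fin_telescope (fun i : Fin (n + 1) =>
      fbmCov (2 * H) (t j.succ) (t i) - fbmCov (2 * H) (t j.castSucc) (t i))
    have e : ∑ k : Fin n, K j k
        = (fbmCov (2 * H) (t j.succ) (t (Fin.last n)) - fbmCov (2 * H) (t j.succ) (t 0))
          - (fbmCov (2 * H) (t j.castSucc) (t (Fin.last n))
            - fbmCov (2 * H) (t j.castSucc) (t 0)) := by
      calc ∑ k : Fin n, K j k
          = ∑ k : Fin n,
            ((fbmCov (2 * H) (t j.succ) (t k.succ) - fbmCov (2 * H) (t j.castSucc) (t k.succ))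
            - (fbmCov (2 * H) (t j.succ) (t k.castSucc)
              - fbmCov (2 * H) (t j.castSucc) (t k.castSucc))) :=
            Finset.sum_congr rfl fun k _ => by simp only [hK]; ring
        _ = _ := t1
        _ = _ := by ring
    rw [e]
    exact fbm_rowsum_nonneg hp0 ht0 (hmono (Fin.zero_le _)) (hab j) (hmono (Fin.le_last _))
  have hper : ∀ j : Fin n, ∑ k : Fin n, ε j * ε k * K j k
      ≤ 2 * (t j.succ - t j.castSucc) ^ (2 * H) := by
    intro j
    have hle : ∀ k : Fin n, ε j * ε k * K j k ≤ -K j k + (if k = j then 2 * K j j else 0) := by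
      intro k
      by_cases hk : k = j
      · subst hk
        have h1 : ε k * ε k = 1 := by rcases hε k with h | h <;> rw [h] <;> norm_num
        rw [h1, one_mul, if_pos rfl]
        ring_nf
        linarith
      · have h1 : |ε j * ε k| = 1 := by
          rcases hε j with h | h <;> rcases hε k with h' | h' <;> simp [h, h']
        have h2 : ε j * ε k * K j k ≤ |K j k| := by
          calc ε j * ε k * K j k ≤ |ε j * ε k * K j k| := le_abs_self _
            _ = |K j k| := by rw [abs_mul, h1, one_mul]
        have h3 : |K j k| = -K j k := abs_of_nonpos (hKoff j k fun h => hk h.symm)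
        rw [if_neg hk]
        linarith
    calc ∑ k : Fin n, ε j * ε k * K j k
        ≤ ∑ k : Fin n, (-K j k + (if k = j then 2 * K j j else 0)) :=
          Finset.sum_le_sum fun k _ => hle k
      _ = -∑ k : Fin n, K j k + 2 * K j j := by
          rw [Finset.sum_add_distrib, Finset.sum_ite_eq' Finset.univ j (fun _ => 2 * K j j),
            if_pos (Finset.mem_univ j), ← Finset.sum_neg_distrib]
      _ ≤ 2 * K j j := by linarith [hrow j]
      _ = 2 * (t j.succ - t j.castSucc) ^ (2 * H) := by rw [hKdiag j]
  rw [hexp]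
  calc ∑ j : Fin n, ∑ k : Fin n, ε j * ε k * K j k
      ≤ ∑ j : Fin n, 2 * (t j.succ - t j.castSucc) ^ (2 * H) :=
        Finset.sum_le_sum fun j _ => hper j
    _ = 2 * ∑ j : Fin n, |t j.succ - t j.castSucc| ^ (2 * H) := by
        rw [Finset.mul_sum]
        exact Finset.sum_congr rfl fun j _ => by
          rw [abs_of_nonneg (sub_nonneg.2 (hab j))]
end

section
/- Let Δ_1,...,Δ_n be jointly Gaussian centered random variables such that Var(Σ_{j=1}^n ε_j Δ_j) ≤ 2 T^{2H} n^{(1-2H)_+} for all sign choices ε_j ∈ {-1,+1}. Then P[∩_{j=1}^n {|Δ_j| ≥ δ/2}] ≤ 2^n exp(- T^{-2H} δ² n^{1+(2H∧1)} / 16). -/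
open MeasureTheory ProbabilityTheory Real

lemma gaussianPDFReal_shift_le {v : NNReal} (hv : v ≠ 0) {a x : ℝ} (ha : 0 ≤ a) (hx : a ≤ x) :
    gaussianPDFReal 0 v x ≤ Real.exp (-(a ^ 2) / (2 * v)) * gaussianPDFReal a v x := by
  have hv' : (0 : ℝ) < v := by positivity
  rw [gaussianPDFReal_def, gaussianPDFReal_def]
  have hc : (0 : ℝ) ≤ (√(2 * π * v))⁻¹ := by positivity
  have key : rexp (-(x - 0) ^ 2 / (2 * v)) ≤
      rexp (-(a ^ 2) / (2 * v)) * rexp (-(x - a) ^ 2 / (2 * v)) := by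
    rw [← Real.exp_add]
    apply Real.exp_le_exp.2
    rw [← add_div, div_le_div_iff₀ (by positivity) (by positivity)]
    nlinarith [mul_nonneg ha (sub_nonneg.2 hx)]
  calc (√(2 * π * v))⁻¹ * rexp (-(x - 0) ^ 2 / (2 * v))
      ≤ (√(2 * π * v))⁻¹ * (rexp (-(a ^ 2) / (2 * v)) * rexp (-(x - a) ^ 2 / (2 * v))) :=
        mul_le_mul_of_nonneg_left key hc
    _ = rexp (-(a ^ 2) / (2 * v)) * ((√(2 * π * v))⁻¹ * rexp (-(x - a) ^ 2 / (2 * v))) := by ring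

lemma gaussianReal_tail_le {v : NNReal} (hv : v ≠ 0) {a : ℝ} (ha : 0 ≤ a) :
    gaussianReal 0 v {x | a ≤ x} ≤ ENNReal.ofReal (Real.exp (-(a ^ 2) / (2 * v))) := by
  rw [gaussianReal_apply 0 hv]
  have hE : (0 : ℝ) ≤ Real.exp (-(a ^ 2) / (2 * v)) := (Real.exp_pos _).le
  calc ∫⁻ x in {x | a ≤ x}, gaussianPDF 0 v x
      ≤ ∫⁻ x in {x | a ≤ x},
          ENNReal.ofReal (Real.exp (-(a ^ 2) / (2 * v))) * gaussianPDF a v x := by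
        refine setLIntegral_mono (measurable_const.mul (measurable_gaussianPDF a v)) fun x hx => ?_
        rw [gaussianPDF, gaussianPDF, ← ENNReal.ofReal_mul hE]
        exact ENNReal.ofReal_le_ofReal (gaussianPDFReal_shift_le hv ha hx)
    _ = ENNReal.ofReal (Real.exp (-(a ^ 2) / (2 * v))) * ∫⁻ x in {x | a ≤ x}, gaussianPDF a v x :=
        lintegral_const_mul' _ _ ENNReal.ofReal_ne_top
    _ ≤ ENNReal.ofReal (Real.exp (-(a ^ 2) / (2 * v))) * ∫⁻ x, gaussianPDF a v x :=
        mul_le_mul_right (setLIntegral_le_lintegral _ _) _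
    _ = ENNReal.ofReal (Real.exp (-(a ^ 2) / (2 * v))) := by
        rw [lintegral_gaussianPDF_eq_one a hv, mul_one]

/-- Let `Δ_1,...,Δ_n` be jointly Gaussian centered random variables (so that
every signed sum `Σ ε_j Δ_j` is a centered Gaussian) such that
`Var(Σ_{j=1}^n ε_j Δ_j) ≤ 2 T^{2H} n^{(1-2H)_+}` for all sign choices `ε_j ∈ {-1,+1}`.
Then `P[∩_{j=1}^n {|Δ_j| ≥ δ/2}] ≤ 2^n exp(-T^{-2H} δ² n^{1+(2H∧1)} / 16)`. -/
theorem gaussian_joint_fluctuation_bound {Ω : Type*} [MeasurableSpace Ω] (μ : Measure Ω)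
    [IsProbabilityMeasure μ]
    (H T δ : ℝ) (hH : H ∈ Set.Ioc (0 : ℝ) 1) (hT : 0 < T) (hδ : 0 < δ)
    (n : ℕ) (Δ : Fin n → Ω → ℝ) (hmeas : ∀ j, Measurable (Δ j))
    (hgauss : ∀ ε : Fin n → ℝ, (∀ j, ε j = 1 ∨ ε j = -1) →
      ∃ v : NNReal, μ.map (fun ω => ∑ j : Fin n, ε j * Δ j ω) = gaussianReal 0 v ∧
        (v : ℝ) ≤ 2 * T ^ (2 * H) * (n : ℝ) ^ (max (1 - 2 * H) 0)) :
    (μ (⋂ j : Fin n, {ω : Ω | δ / 2 ≤ |Δ j ω|})).toReal ≤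
      2 ^ n * Real.exp (-(T ^ (-(2 * H)) * δ ^ 2 * (n : ℝ) ^ (1 + min (2 * H) 1) / 16)) := by
  have hH0 := hH.1
  have hminpos : (0 : ℝ) < 1 + min (2 * H) 1 := by
    have : (0:ℝ) < min (2 * H) 1 := lt_min (by linarith) one_pos
    linarith
  by_cases hn : n = 0
  · subst hn
    simp only [Nat.cast_zero, Real.zero_rpow (ne_of_gt hminpos), mul_zero, zero_div, neg_zero,
      Real.exp_zero, pow_zero, mul_one]
    rw [Set.iInter_of_empty, measure_univ, ENNReal.toReal_one]
  -- main case
  have hn' : (0 : ℝ) < (n : ℝ) := by exact_mod_cast Nat.pos_of_ne_zero hn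
  set a : ℝ := n * δ / 2 with ha_def
  have ha : 0 < a := by positivity
  set B : ℝ := T ^ (-(2 * H)) * δ ^ 2 * (n : ℝ) ^ (1 + min (2 * H) 1) / 16 with hB_def
  set V : ℝ := 2 * T ^ (2 * H) * (n : ℝ) ^ (max (1 - 2 * H) 0) with hV_def
  have hV : 0 < V := by positivity
  have hBV : B * (2 * V) = a ^ 2 := by
    have hsum : min (2 * H) 1 + max (1 - 2 * H) 0 = 1 := by
      rcases le_total (2 * H) 1 with h | h
      · rw [min_eq_left h, max_eq_left (by linarith)]; ring
      · rw [min_eq_right h, max_eq_right (by linarith)]; ring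
    have h1 : (n : ℝ) ^ (1 + min (2 * H) 1) * (n : ℝ) ^ (max (1 - 2 * H) 0) = (n : ℝ) ^ (2 : ℕ) := by
      rw [← Real.rpow_add hn', ← Real.rpow_natCast (n : ℝ) 2]
      congr 1
      push_cast
      linarith
    have h2 : T ^ (-(2 * H)) * T ^ (2 * H) = 1 := by
      rw [← Real.rpow_add hT]; simp
    have : B * (2 * V) =
        δ ^ 2 * ((n : ℝ) ^ (1 + min (2 * H) 1) * (n : ℝ) ^ (max (1 - 2 * H) 0)) *
          (T ^ (-(2 * H)) * T ^ (2 * H)) / 4 := by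
      rw [hB_def, hV_def]; ring
    rw [this, h1, h2, ha_def]
    ring
  have hB : 0 ≤ B := by
    nlinarith [sq_nonneg a]
  -- the union over sign choices
  set S : (Fin n → Bool) → Ω → ℝ :=
    fun σ ω => ∑ j : Fin n, (if σ j then (1:ℝ) else -1) * Δ j ω with hS_def
  have hsub : (⋂ j : Fin n, {ω : Ω | δ / 2 ≤ |Δ j ω|}) ⊆ ⋃ σ : Fin n → Bool, {ω | a ≤ S σ ω} := by
    intro ω hω
    simp only [Set.mem_iInter, Set.mem_setOf_eq] at hω
    refine Set.mem_iUnion.2 ⟨fun j => decide (0 ≤ Δ j ω), ?_⟩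
    simp only [Set.mem_setOf_eq, hS_def]
    have habs : ∀ j : Fin n, (if decide (0 ≤ Δ j ω) then (1:ℝ) else -1) * Δ j ω = |Δ j ω| := by
      intro j
      by_cases h : 0 ≤ Δ j ω
      · simp [h, abs_of_nonneg h]
      · simp [h, abs_of_neg (lt_of_not_ge h)]
    calc a = ∑ _j : Fin n, δ / 2 := by
            rw [Finset.sum_const, Finset.card_univ, Fintype.card_fin, nsmul_eq_mul, ha_def]; ring
      _ ≤ ∑ j : Fin n, (if decide (0 ≤ Δ j ω) then (1:ℝ) else -1) * Δ j ω := by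
            apply Finset.sum_le_sum
            intro j _
            rw [habs j]
            exact hω j
  have key : ∀ σ : Fin n → Bool, μ {ω | a ≤ S σ ω} ≤ ENNReal.ofReal (Real.exp (-B)) := by
    intro σ
    set ε : Fin n → ℝ := fun j => if σ j then 1 else -1 with hε_def
    obtain ⟨v, hmap, hvle⟩ := hgauss ε (fun j => by by_cases h : σ j <;> simp [hε_def, h])
    have hSm : Measurable (S σ) := by
      apply Finset.measurable_sum
      intro j _
      exact ((hmeas j).const_mul _)
    have hset : {ω | a ≤ S σ ω} = S σ ⁻¹' Set.Ici a := rfl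
    have hmapeq : μ {ω | a ≤ S σ ω} = gaussianReal 0 v (Set.Ici a) := by
      rw [hset, ← Measure.map_apply hSm measurableSet_Ici, ← hmap]
    rw [hmapeq]
    by_cases hv : v = 0
    · subst hv
      rw [gaussianReal_zero_var, Measure.dirac_apply' _ measurableSet_Ici]
      have : (0:ℝ) ∉ Set.Ici a := by simp [ha]
      simp [Set.indicator_of_notMem this]
    · have hv' : (0:ℝ) < v := by positivity
      have htail := gaussianReal_tail_le hv ha.le
      have : Set.Ici a = {x : ℝ | a ≤ x} := rfl
      rw [this]
      refine htail.trans (ENNReal.ofReal_le_ofReal (Real.exp_le_exp.2 ?_))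
      -- -(a^2)/(2v) ≤ -B  ⟺  B ≤ a^2/(2v)
      rw [neg_div, neg_le_neg_iff, le_div_iff₀ (by positivity)]
      calc B * (2 * v) ≤ B * (2 * V) := by
            apply mul_le_mul_of_nonneg_left _ hB
            linarith
        _ = a ^ 2 := hBV
  have hmain : μ (⋂ j : Fin n, {ω : Ω | δ / 2 ≤ |Δ j ω|}) ≤
      ENNReal.ofReal (2 ^ n * Real.exp (-B)) := by
    calc μ (⋂ j : Fin n, {ω : Ω | δ / 2 ≤ |Δ j ω|})
        ≤ μ (⋃ σ : Fin n → Bool, {ω | a ≤ S σ ω}) := measure_mono hsub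
      _ ≤ ∑ σ : Fin n → Bool, μ {ω | a ≤ S σ ω} := measure_iUnion_fintype_le μ _
      _ ≤ ∑ _σ : Fin n → Bool, ENNReal.ofReal (Real.exp (-B)) :=
          Finset.sum_le_sum fun σ _ => key σ
      _ = (2 ^ n : ℕ) * ENNReal.ofReal (Real.exp (-B)) := by
          rw [Finset.sum_const, Finset.card_univ, nsmul_eq_mul]
          congr 1
          simp [Fintype.card_fun]
      _ = ENNReal.ofReal (2 ^ n * Real.exp (-B)) := by
          rw [ENNReal.ofReal_mul (by positivity)]
          congr 1
          rw [← ENNReal.ofReal_natCast (2 ^ n)]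
          push_cast
          ring_nf
  exact ENNReal.toReal_le_of_le_ofReal (by positivity) hmain
end
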